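/- Let f : ℂ → ℂ be entire and non-constant, and let n > k ≥ 1 be integers. If (f^n)^{(k)} = f^n identically, then f has no zeros. -/

import Mathlib

/-- Auxiliary predicate: `F` vanishes to order exactly `d` at `z₀`. -/
def HOrd (F : ℂ → ℂ) (z₀ : ℂ) (d : ℕ) : Prop :=
  ∃ g : ℂ → ℂ, AnalyticAt ℂ g z₀ ∧ g z₀ ≠ 0 ∧
    ∀ᶠ z in nhds z₀, F z = (z - z₀) ^ d • g z

lemma analyticAt_deriv' {g : ℂ → ℂ} {z₀ : ℂ} (hg : AnalyticAt ℂ g z₀) :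
    AnalyticAt ℂ (deriv g) z₀ := by
  rw [Complex.analyticAt_iff_eventually_differentiableAt]
  filter_upwards [hg.eventually_analyticAt] with y hy
  have h1 : DifferentiableAt ℂ (fderiv ℂ g) y := hy.fderiv.differentiableAt
  have h2 : DifferentiableAt ℂ (fun z => (fderiv ℂ g z) (1 : ℂ)) y :=
    h1.clm_apply (differentiableAt_const 1)
  have : (fun z => (fderiv ℂ g z) (1 : ℂ)) = deriv g := by
    funext z; exact fderiv_apply_one_eq_deriv
  rwa [this] at h2

lemma HOrd.deriv_step {F : ℂ → ℂ} {z₀ : ℂ} {d : ℕ}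
    (h : HOrd F z₀ (d + 1)) : HOrd (deriv F) z₀ d := by
  obtain ⟨g, hg, hg0, hFg⟩ := h
  refine ⟨fun z => ((d : ℂ) + 1) * g z + (z - z₀) * deriv g z, ?_, ?_, ?_⟩
  · exact (analyticAt_const.mul hg).add
      ((analyticAt_id.sub analyticAt_const).mul (analyticAt_deriv' hg))
  · simp only [sub_self, zero_mul, add_zero]
    exact mul_ne_zero (by exact Nat.cast_add_one_ne_zero d) hg0
  · have h1 : deriv F =ᶠ[nhds z₀] deriv (fun z => (z - z₀) ^ (d + 1) • g z) :=
      Filter.EventuallyEq.deriv hFg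
    filter_upwards [h1, hg.eventually_analyticAt] with z hz hae
    rw [hz]
    have hp : HasDerivAt (fun w => (w - z₀) ^ (d + 1))
        (((d : ℂ) + 1) * (z - z₀) ^ d) z := by
      simpa using ((hasDerivAt_id z).sub_const z₀).fun_pow (d + 1)
    have hq : HasDerivAt g (deriv g z) z := hae.differentiableAt.hasDerivAt
    have hder : deriv (fun w => (w - z₀) ^ (d + 1) • g w) z =
        ((d : ℂ) + 1) * (z - z₀) ^ d * g z + (z - z₀) ^ (d + 1) * deriv g z := by
      simpa [smul_eq_mul] using (hp.fun_mul hq).deriv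
    rw [hder, smul_eq_mul]
    ring

lemma HOrd.iteratedDeriv_step {F : ℂ → ℂ} {z₀ : ℂ} {d j : ℕ} (hj : j ≤ d)
    (h : HOrd F z₀ d) : HOrd (iteratedDeriv j F) z₀ (d - j) := by
  induction j with
  | zero => simpa [iteratedDeriv_zero] using h
  | succ m ih =>
    have hm : m ≤ d := Nat.le_of_succ_le hj
    have h' : HOrd (iteratedDeriv m F) z₀ (d - m) := ih hm
    have hdm : d - m = (d - (m + 1)) + 1 := by omega
    rw [hdm] at h'
    rw [iteratedDeriv_succ]
    exact h'.deriv_step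

lemma HOrd.unique {F : ℂ → ℂ} {z₀ : ℂ} {d e : ℕ}
    (hd : HOrd F z₀ d) (he : HOrd F z₀ e) : d = e :=
  AnalyticAt.unique_eventuallyEq_pow_smul_nonzero hd he

/-- If f is entire and non-constant, n > k ≥ 1 and (f^n)^(k) = f^n
identically, then f has no zeros. -/
theorem stmt_1 (f : ℂ → ℂ) (hf : Differentiable ℂ f)
    (hnc : ¬∃ c : ℂ, f = fun _ => c) (n k : ℕ) (hk : 1 ≤ k) (hnk : k < n)
    (heq : iteratedDeriv k (f ^ n) = f ^ n) :
    ∀ z : ℂ, f z ≠ 0 := by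
  intro z₁ hz₁
  have hfa : AnalyticAt ℂ f z₁ := hf.analyticAt z₁
  -- f is not eventually zero near z₁
  have hne : ¬ ∀ᶠ z in nhds z₁, f z = 0 := by
    intro hev
    apply hnc
    refine ⟨0, funext fun z => ?_⟩
    have hU : AnalyticOnNhd ℂ f Set.univ := fun w _ => hf.analyticAt w
    have hfreq : ∃ᶠ w in nhdsWithin z₁ {z₁}ᶜ, f w = 0 :=
      (hev.filter_mono nhdsWithin_le_nhds).frequently
    have := hU.eqOn_zero_of_preconnected_of_frequently_eq_zero
      isPreconnected_univ (Set.mem_univ z₁) hfreq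
    exact this (Set.mem_univ z)
  -- get the order q of f at z₁
  obtain ⟨q, g, hg, hg0, hfg⟩ :=
    hfa.exists_eventuallyEq_pow_smul_nonzero_iff.mpr hne
  have hq : HOrd f z₁ q := ⟨g, hg, hg0, hfg⟩
  have hq1 : 1 ≤ q := by
    rcases Nat.eq_zero_or_pos q with h0 | h; swap
    · exact h
    exfalso
    have := hfg.self_of_nhds
    rw [h0] at this
    simp only [pow_zero, one_smul] at this
    exact hg0 (this ▸ hz₁)
  -- f^n has order n*q at z₁
  have hpow : HOrd (f ^ n) z₁ (n * q) := by
    refine ⟨g ^ n, hg.pow n, pow_ne_zero n hg0, ?_⟩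
    filter_upwards [hfg] with z hz
    simp only [Pi.pow_apply, smul_eq_mul] at *
    rw [hz, mul_pow, ← pow_mul, mul_comm q n]
  -- the k-th derivative of f^n has order n*q - k
  have hkle : k ≤ n * q := le_trans hnk.le (Nat.le_mul_of_pos_right n hq1)
  have hiter : HOrd (iteratedDeriv k (f ^ n)) z₁ (n * q - k) :=
    hpow.iteratedDeriv_step hkle
  rw [heq] at hiter
  have := hpow.unique hiter
  omega
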